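/- Let $(R, \mathfrak{m}, k)$ be a Noetherian local ring of dimension $d$, let $J \subseteq \mathfrak{m}$ be an ideal generated by elements $x_1, \ldots, x_d$, and suppose $\mathfrak{m} = J + (y_1, \ldots, y_t)$ and $\mathfrak{m}^{c+1} \subseteq J$ for some integers $t, c \geq 0$. Then the length of $R/J$ satisfies $\ell_R(R/J) \leq \binom{t + c}{c}$. -/

import Mathlib

open Submodule


lemma aux_krullDim_le_of_nat {α : Type*} [Preorder α] (f : α → ℕ) (hf : StrictMono f)
    (B : ℕ) (hB : ∀ a, f a ≤ B) : Order.krullDim α ≤ (B : WithBot ℕ∞) := by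
  apply iSup_le
  intro p
  have key : ∀ n, (hn : n ≤ p.length) → n ≤ f (p ⟨n, by omega⟩) := by
    intro n
    induction n with
    | zero => simp
    | succ m ih =>
      intro hn
      have h1 : f (p ⟨m, by omega⟩) < f (p ⟨m + 1, by omega⟩) :=
        hf (p.strictMono (by simp [Fin.lt_def]))
      have := ih (by omega)
      omega
  have : p.length ≤ B := le_trans (key p.length le_rfl) (hB _)
  exact_mod_cast this


lemma aux_layer {R : Type*} [CommRing R] (I : Ideal R) [hI : I.IsMaximal]
    {W : Type*} [AddCommGroup W] [Module R W] (G : Submodule R W)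
    (hG : Module.IsTorsionBySet R G (I : Set R))
    {n : ℕ} (v : Fin n → W) (hv : ∀ j, v j ∈ G)
    (hspan : G ≤ Submodule.span R (Set.range v)) :
    ∃ D : Submodule R W → ℕ, Monotone D ∧
      (∀ P P' : Submodule R W, P ≤ G → P' ≤ G → P < P' → D P < D P') ∧
      (∀ P, D P ≤ n) := by
  letI : Field (R ⧸ I) := Ideal.Quotient.field I
  letI : Module (R ⧸ I) G := hG.module
  have smul_eq : ∀ (r : R) (x : G), (Ideal.Quotient.mk I r) • x = r • x :=
    fun r x => hG.mk_smul r x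
  let kRes : Submodule R W → Submodule (R ⧸ I) G := fun P =>
    { carrier := {x : G | (x : W) ∈ P}
      add_mem' := fun hx hy => P.add_mem hx hy
      zero_mem' := P.zero_mem
      smul_mem' := by
        intro z x hx
        obtain ⟨r, rfl⟩ := Ideal.Quotient.mk_surjective z
        rw [smul_eq r x]
        exact P.smul_mem r hx }
  have kRes_mono : Monotone kRes := fun P P' h x hx => h hx
  have hspan' : Submodule.span (R ⧸ I) (Set.range fun j => (⟨v j, hv j⟩ : G)) = ⊤ := by
    rw [eq_top_iff]
    intro x _
    set S := Submodule.span (R ⧸ I) (Set.range fun j => (⟨v j, hv j⟩ : G)) with hS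
    -- the image of S in W is an R-submodule
    let T : Submodule R W :=
      { carrier := Subtype.val '' (S : Set G)
        add_mem' := by
          rintro _ _ ⟨a, ha, rfl⟩ ⟨b, hb, rfl⟩
          exact ⟨a + b, S.add_mem ha hb, rfl⟩
        zero_mem' := ⟨0, S.zero_mem, rfl⟩
        smul_mem' := by
          rintro r _ ⟨a, ha, rfl⟩
          refine ⟨r • a, ?_, rfl⟩
          rw [← smul_eq r a]
          exact S.smul_mem _ ha }
    have hT : Submodule.span R (Set.range v) ≤ T := by
      apply Submodule.span_le.2
      rintro _ ⟨j, rfl⟩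
      exact ⟨⟨v j, hv j⟩, Submodule.subset_span ⟨j, rfl⟩, rfl⟩
    obtain ⟨z, hz, hzx⟩ := hT (hspan x.2)
    have : z = x := Subtype.ext hzx
    exact this ▸ hz
  haveI : Module.Finite (R ⧸ I) G := by
    constructor
    rw [← hspan']
    exact Submodule.fg_span (Set.finite_range _)
  refine ⟨fun P => Module.finrank (R ⧸ I) (kRes P), ?_, ?_, ?_⟩
  · intro P P' h
    exact Submodule.finrank_mono (kRes_mono h)
  · intro P P' hP hP' hlt
    apply Submodule.finrank_lt_finrank_of_lt
    refine lt_of_le_of_ne (kRes_mono hlt.le) ?_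
    obtain ⟨w, hw', hw⟩ := SetLike.exists_of_lt hlt
    intro he
    exact hw (by {have : (⟨w, hP' hw'⟩ : G) ∈ kRes P' := hw'; rw [← he] at this; exact this})
  · intro P
    classical
    refine le_trans (Submodule.finrank_le (kRes P)) ?_
    rw [show Module.finrank (R ⧸ I) G = Module.finrank (R ⧸ I) (⊤ : Submodule (R ⧸ I) G) from
      (finrank_top _ _).symm, ← hspan']
    refine le_trans (finrank_span_le_card _) ?_
    rw [Set.toFinset_range]
    exact le_trans (Finset.card_image_le) (by simp)

lemma aux_sum_multichoose (t c : ℕ) :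
    ∑ i ∈ Finset.range (c + 1), Nat.multichoose t i ≤ (t + c).choose c := by
  match t with
  | 0 =>
    have : ∀ i ∈ Finset.range (c+1), Nat.multichoose 0 i = if i = 0 then 1 else 0 := by
      intro i _
      match i with
      | 0 => simp [Nat.multichoose]
      | (i+1) => simp [Nat.multichoose_eq]
    rw [Finset.sum_congr rfl this]
    simp
  | (t+1) =>
    have : ∀ i ∈ Finset.range (c+1), Nat.multichoose (t+1) i = (i + t).choose t := by
      intro i _
      rw [Nat.multichoose_eq]
      have h1 : t + 1 + i - 1 = t + i := by omega
      rw [h1, show t + i = i + t by omega]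
      rw [← Nat.choose_symm (by omega : t ≤ i + t), show i + t - t = i by omega]
    rw [Finset.sum_congr rfl this, Nat.sum_range_add_choose c t]
    rw [show c + t + 1 = (t + 1) + c by omega]
    rw [← Nat.choose_symm (by omega : t + 1 ≤ t + 1 + c), show t + 1 + c - (t+1) = c by omega]

-- multiset products lie in powers
lemma aux_prod_mem_pow {R : Type*} [CommRing R] (I : Ideal R) (T : Multiset R)
    (hT : ∀ x ∈ T, x ∈ I) : T.prod ∈ I ^ Multiset.card T := by
  induction T using Multiset.induction with
  | empty => simp [Ideal.one_eq_top]
  | cons a T ih =>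
    rw [Multiset.prod_cons, Multiset.card_cons, pow_succ']
    exact Ideal.mul_mem_mul (hT a (Multiset.mem_cons_self a T))
      (ih fun x hx => hT x (Multiset.mem_cons_of_mem hx))

/-- Multiplicity-type bound: if `J = (x₁,…,x_d)`, `𝔪 = J + (y₁,…,y_t)` and `𝔪^{c+1} ⊆ J`, then
the length of `R/J` (expressed as the Krull dimension of its submodule lattice) is at most
`(t+c).choose c`. -/
theorem defect_fpt_stmt12 {R : Type*} [CommRing R] [IsNoetherianRing R] [IsLocalRing R]
    (d : ℕ) (hdim : ringKrullDim R = d)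
    (x : Fin d → R) (J : Ideal R) (hJ : J = Ideal.span (Set.range x))
    (hJm : J ≤ IsLocalRing.maximalIdeal R)
    (t c : ℕ) (y : Fin t → R)
    (hm : IsLocalRing.maximalIdeal R = J + Ideal.span (Set.range y))
    (hc : IsLocalRing.maximalIdeal R ^ (c + 1) ≤ J) :
    Order.krullDim (Submodule R (R ⧸ J)) ≤ ((t + c).choose c : ℕ) := by
  classical
  set m : Ideal R := IsLocalRing.maximalIdeal R with hmdef
  set π : R →ₗ[R] (R ⧸ J) := J.mkQ with hπ
  set F : ℕ → Submodule R (R ⧸ J) := fun i => Submodule.map π (m ^ i : Ideal R) with hF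
  have hmsup : m = J ⊔ Ideal.span (Set.range y) := by rw [hm, Submodule.add_eq_sup]
  have hy_mem : ∀ j, y j ∈ m := by
    intro j
    rw [hmsup]
    exact (le_sup_right : Ideal.span (Set.range y) ≤ J ⊔ _)
      (Submodule.subset_span ⟨j, rfl⟩)
  have hF0 : F 0 = ⊤ := by
    simp only [hF, pow_zero, Ideal.one_eq_top, Submodule.map_top, hπ, Submodule.range_mkQ]
  have hFtop : F (c + 1) = ⊥ := by
    rw [hF, eq_bot_iff, Submodule.map_le_iff_le_comap]
    intro r hr
    simpa [Submodule.mem_comap, hπ, Submodule.Quotient.mk_eq_zero] using hc hr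
  have hFmono : ∀ i, F (i + 1) ≤ F i := fun i =>
    Submodule.map_mono (Ideal.pow_le_pow_right (by omega))
  have hFsmul : ∀ i, m • F i ≤ F (i + 1) := by
    intro i
    rw [hF]
    rw [← Submodule.map_smul'' m (m ^ i : Ideal R) π]
    apply Submodule.map_mono
    rw [smul_eq_mul, ← pow_succ']
  -- monomials
  set g : ∀ i : ℕ, Sym (Fin t) i → R := fun i s => (s.val.map y).prod with hg
  have hg_mem : ∀ i s, g i s ∈ (m ^ i : Ideal R) := by
    intro i s
    have := aux_prod_mem_pow m (s.val.map y) (by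
      rintro x hx
      obtain ⟨j, _, rfl⟩ := Multiset.mem_map.1 hx
      exact hy_mem j)
    rwa [Multiset.card_map, s.2] at this
  have hspan_pow : ∀ i : ℕ, (m ^ i : Ideal R) ≤ J ⊔ Ideal.span (Set.range (g i)) := by
    intro i
    induction i with
    | zero =>
      have h1 : (1 : R) ∈ Set.range (g 0) := ⟨⟨0, rfl⟩, by simp only [hg]; exact (by simp : (Multiset.map y (0 : Multiset (Fin t))).prod = 1)⟩
      have : Ideal.span (Set.range (g 0)) = ⊤ := Ideal.eq_top_iff_one _ |>.2
        (Submodule.subset_span h1)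
      rw [this]
      simp
    | succ i ih =>
      rw [pow_succ]
      calc (m ^ i : Ideal R) * m
          ≤ (J ⊔ Ideal.span (Set.range (g i))) * (J ⊔ Ideal.span (Set.range y)) :=
            Ideal.mul_mono ih (le_of_eq hmsup)
        _ ≤ J ⊔ Ideal.span (Set.range (g (i + 1))) := by
            rw [Submodule.mul_sup]
            apply sup_le
            · exact le_sup_of_le_left Ideal.mul_le_right
            · rw [Submodule.sup_mul]
              apply sup_le
              · exact le_sup_of_le_left Ideal.mul_le_left
              · apply le_sup_of_le_right
                rw [Ideal.span_mul_span']
                apply Ideal.span_mono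
                rintro _ ⟨a, ⟨s, rfl⟩, b, ⟨j, rfl⟩, rfl⟩
                exact ⟨Sym.cons j s, by
                  simp [hg, Sym.cons, Multiset.map_cons, Multiset.prod_cons, mul_comm]⟩
  -- layer machinery
  set q : ∀ i : ℕ, (R ⧸ J) →ₗ[R] ((R ⧸ J) ⧸ F (i + 1)) := fun i => (F (i + 1)).mkQ with hq
  set ψ : ∀ i : ℕ, R →ₗ[R] ((R ⧸ J) ⧸ F (i + 1)) := fun i => (q i) ∘ₗ π with hψ
  set G : ∀ i : ℕ, Submodule R ((R ⧸ J) ⧸ F (i + 1)) := fun i => Submodule.map (q i) (F i)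
    with hG
  have hGψ : ∀ i, G i = Submodule.map (ψ i) (m ^ i : Ideal R) := by
    intro i
    exact (Submodule.map_comp π (q i) (m ^ i : Ideal R)).symm
  have hψJ : ∀ i, Submodule.map (ψ i) J = ⊥ := by
    intro i
    rw [eq_bot_iff, Submodule.map_le_iff_le_comap]
    intro r hr
    simp only [Submodule.mem_comap, hψ, LinearMap.comp_apply]
    rw [show π r = 0 from by rw [hπ, Submodule.mkQ_apply]; exact (Submodule.Quotient.mk_eq_zero J).2 hr]
    simp
  -- torsion
  have hGtor : ∀ i, Module.IsTorsionBySet R (G i) (m : Set R) := by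
    intro i
    intro x a
    apply Subtype.ext
    obtain ⟨u, hu, hux⟩ := x.2
    have h1 : ((a : R) • x : G i) = (a : R) • (x : (R ⧸ J) ⧸ F (i + 1)) := rfl
    rw [h1, ← hux, ← map_smul]
    have : (a : R) • u ∈ F (i + 1) := hFsmul i (Submodule.smul_mem_smul a.2 hu)
    simpa [hq, Submodule.Quotient.mk_eq_zero] using
      (Submodule.Quotient.mk_eq_zero (F (i+1))).2 this
  -- spanning elements
  have hv_mem : ∀ i (s : Sym (Fin t) i), (ψ i) (g i s) ∈ G i := by
    intro i s
    rw [hGψ]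
    exact Submodule.mem_map_of_mem (hg_mem i s)
  have hGspan : ∀ i, G i ≤ Submodule.span R (Set.range fun s : Sym (Fin t) i => (ψ i) (g i s)) := by
    intro i
    rw [hGψ]
    calc Submodule.map (ψ i) (m ^ i : Ideal R)
        ≤ Submodule.map (ψ i) (J ⊔ Ideal.span (Set.range (g i))) :=
          Submodule.map_mono (hspan_pow i)
      _ = Submodule.map (ψ i) J ⊔ Submodule.map (ψ i) (Ideal.span (Set.range (g i))) :=
          Submodule.map_sup _ _ _
      _ ≤ Submodule.span R (Set.range fun s : Sym (Fin t) i => (ψ i) (g i s)) := by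
          rw [hψJ i, ← Ideal.submodule_span_eq, Submodule.map_span]
          simp only [bot_sup_eq]
          apply Submodule.span_mono
          rintro _ ⟨_, ⟨s, rfl⟩, rfl⟩
          exact ⟨s, rfl⟩
  -- dimensions per layer
  have hD : ∀ i : ℕ, ∃ D : Submodule R ((R ⧸ J) ⧸ F (i + 1)) → ℕ, Monotone D ∧
      (∀ P P', P ≤ G i → P' ≤ G i → P < P' → D P < D P') ∧
      (∀ P, D P ≤ Fintype.card (Sym (Fin t) i)) := by
    intro i
    have e := (Fintype.equivFin (Sym (Fin t) i)).symm
    refine aux_layer m (G i) (hGtor i) (fun a => (ψ i) (g i (e a))) (fun a => hv_mem i (e a)) ?_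
    refine le_trans (hGspan i) (Submodule.span_mono ?_)
    rintro _ ⟨s, rfl⟩
    exact ⟨e.symm s, by simp⟩
  choose D hDmono hDstrict hDbound using hD
  -- components
  set comp : ∀ i : ℕ, Submodule R (R ⧸ J) → Submodule R ((R ⧸ J) ⧸ F (i + 1)) :=
    fun i N => Submodule.map (q i) (N ⊓ F i) with hcomp
  have hcomp_mono : ∀ i, Monotone (comp i) := fun i N N' h =>
    Submodule.map_mono (inf_le_inf_right _ h)
  have hcomp_le : ∀ i N, comp i N ≤ G i := fun i N =>
    Submodule.map_mono inf_le_right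
  -- key injectivity via modularity
  have hkey : ∀ N N' : Submodule R (R ⧸ J), N ≤ N' →
      (∀ i, i ≤ c → comp i N = comp i N') → N = N' := by
    intro N N' hle hcompeq
    have main : ∀ j, j ≤ c + 1 → N ⊓ F (c + 1 - j) = N' ⊓ F (c + 1 - j) := by
      intro j
      induction j with
      | zero => intro _; simp only [Nat.sub_zero, hFtop, inf_bot_eq]
      | succ j ih =>
        intro hj
        have hiha := ih (by omega)
        have e1 : c + 1 - (j + 1) = c - j := by omega
        have e2 : c + 1 - j = c - j + 1 := by omega
        rw [e2] at hiha
        rw [e1]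
        set i := c - j with hi
        have h3 := congrArg (Submodule.comap (q i)) (hcompeq i (by omega))
        simp only [hcomp] at h3
        rw [Submodule.comap_map_eq, Submodule.comap_map_eq] at h3
        rw [show LinearMap.ker (q i) = F (i + 1) from Submodule.ker_mkQ _] at h3
        -- h3 : (N ⊓ F i) ⊔ F (i+1) = (N' ⊓ F i) ⊔ F (i+1)
        have hAB : N ⊓ F i ≤ N' ⊓ F i := inf_le_inf_right _ hle
        have h4 : F (i + 1) ⊓ (N' ⊓ F i) = N' ⊓ F (i + 1) := by
          apply le_antisymm
          · exact le_inf (le_trans inf_le_right inf_le_left) inf_le_left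
          · exact le_inf inf_le_right (le_inf inf_le_left (le_trans inf_le_right (hFmono i)))
        have h5 : N ⊓ F (i + 1) ≤ N ⊓ F i := inf_le_inf_left _ (hFmono i)
        calc N ⊓ F i = (N ⊓ F i) ⊔ (N ⊓ F (i + 1)) := (sup_eq_left.2 h5).symm
          _ = (N ⊓ F i) ⊔ (N' ⊓ F (i + 1)) := by rw [hiha]
          _ = (N ⊓ F i) ⊔ (F (i + 1) ⊓ (N' ⊓ F i)) := by rw [h4]
          _ = ((N ⊓ F i) ⊔ F (i + 1)) ⊓ (N' ⊓ F i) := (sup_inf_assoc_of_le _ hAB).symm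
          _ = ((N' ⊓ F i) ⊔ F (i + 1)) ⊓ (N' ⊓ F i) := by rw [h3]
          _ = N' ⊓ F i := inf_eq_right.2 le_sup_left
    have hfin := main (c + 1) le_rfl
    simp only [Nat.sub_self, hF0, inf_top_eq] at hfin
    exact hfin
  -- the rank function
  set f : Submodule R (R ⧸ J) → ℕ :=
    fun N => ∑ i ∈ Finset.range (c + 1), D i (comp i N) with hf
  have hfstrict : StrictMono f := by
    intro N N' hlt
    have hex : ∃ i, i ≤ c ∧ comp i N ≠ comp i N' := by
      by_contra hco
      push_neg at hco
      exact hlt.ne (hkey N N' hlt.le hco)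
    obtain ⟨i₀, hi₀, hne⟩ := hex
    apply Finset.sum_lt_sum
    · intro i _
      exact hDmono i (hcomp_mono i hlt.le)
    · exact ⟨i₀, Finset.mem_range.2 (by omega),
        hDstrict i₀ _ _ (hcomp_le i₀ N) (hcomp_le i₀ N')
          (lt_of_le_of_ne (hcomp_mono i₀ hlt.le) hne)⟩
  have hfbound : ∀ N, f N ≤ (t + c).choose c := by
    intro N
    calc f N ≤ ∑ i ∈ Finset.range (c + 1), Fintype.card (Sym (Fin t) i) :=
        Finset.sum_le_sum fun i _ => hDbound i _
      _ = ∑ i ∈ Finset.range (c + 1), Nat.multichoose t i := by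
        refine Finset.sum_congr rfl fun i _ => ?_
        rw [Sym.card_sym_eq_multichoose, Fintype.card_fin]
      _ ≤ (t + c).choose c := aux_sum_multichoose t c
  exact aux_krullDim_le_of_nat f hfstrict _ hfbound
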